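/- For complex s with Re(s) > 0 and real x < 0, li_s(x) = (1/Γ(s)) ∫_0^∞ t^{s-1} e^{-(t-x)}/(1 - e^{-(t-x)}) dt; equivalently li_s(x) = ∫_0^∞ (t^{s-1}/Γ(s)) · li_0(x - t) dt where li_0(y) = 1/(e^{-y} - 1). -/

import Mathlib

open MeasureTheory Set Complex

theorem li_convolution_repr (s : ℂ) (hs : 0 < s.re) (x : ℝ) (hx : x < 0) :
    ∑' n : ℕ, Complex.exp ((n + 1 : ℕ) * x) / ((n + 1 : ℕ) : ℂ) ^ s =
      (1 / Complex.Gamma s) *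
        ∫ t in Set.Ioi (0 : ℝ),
          (t : ℂ) ^ (s - 1) * Complex.exp (-((t : ℂ) - x)) / (1 - Complex.exp (-((t : ℂ) - x))) := by
  set F : ℝ → ℂ := fun t ↦ Complex.exp (-((t : ℂ) - x)) / (1 - Complex.exp (-((t : ℂ) - x)))
  set a : ℕ → ℂ := fun n ↦ Complex.exp ((n + 1 : ℕ) * x)
  set p : ℕ → ℝ := fun n ↦ (n : ℝ) + 1
  have hp : ∀ n, a n = 0 ∨ 0 < p n := fun n ↦ Or.inr (by positivity)
  have hF : ∀ t ∈ Ioi (0:ℝ), HasSum (fun n ↦ a n * Real.exp (-p n * t)) (F t) := by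
    intro t ht
    have htx : (0:ℝ) < t - x := by simp only [mem_Ioi] at ht; linarith
    have hr : ‖Complex.exp (-((t : ℂ) - x))‖ < 1 := by
      rw [Complex.norm_exp]
      simp only [neg_re, sub_re, ofReal_re]
      rw [Real.exp_lt_one_iff]
      linarith
    have hgeo := (hasSum_geometric_of_norm_lt_one hr).mul_left
      (Complex.exp (-((t : ℂ) - x)))
    have h1 : Complex.exp (-((t:ℂ) - x)) * (1 - Complex.exp (-((t:ℂ) - x)))⁻¹ = F t := by
      simp [F, div_eq_mul_inv]
    rw [h1] at hgeo
    convert hgeo using 2 with n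
    · rfl
    rw [← Complex.exp_nat_mul, Complex.ofReal_exp, ← Complex.exp_add, ← Complex.exp_add]
    congr 1
    simp only [p]
    push_cast
    ring
  have h_sum : Summable fun n ↦ ‖a n‖ / (p n) ^ s.re := by
    have hex : Real.exp x < 1 := Real.exp_lt_one_iff.mpr hx
    apply Summable.of_nonneg_of_le (fun n ↦ by positivity) (fun n ↦ ?_)
      (summable_geometric_of_lt_one (Real.exp_pos x).le hex)
    have h1 : (1:ℝ) ≤ (p n) ^ s.re := Real.one_le_rpow (by simp [p]) hs.le
    have h2 : ‖a n‖ = Real.exp x ^ (n + 1) := by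
      simp only [a, Complex.norm_exp]
      rw [← Real.exp_nat_mul]
      congr 1
      simp only [Complex.mul_re, Complex.ofReal_re, Complex.ofReal_im, Complex.natCast_re,
        Complex.natCast_im]
      push_cast
      ring
    calc ‖a n‖ / (p n) ^ s.re ≤ ‖a n‖ := div_le_self (norm_nonneg _) h1
      _ = Real.exp x ^ n * Real.exp x := by rw [h2, pow_succ]
      _ ≤ Real.exp x ^ n * 1 := by
          exact mul_le_mul_of_nonneg_left hex.le (by positivity)
      _ = Real.exp x ^ n := mul_one _
  have key := hasSum_mellin hp hs hF h_sum
  have hG : Complex.Gamma s ≠ 0 := Complex.Gamma_ne_zero_of_re_pos hs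
  have key2 : HasSum (fun n ↦ a n / (p n : ℂ) ^ s) (mellin F s / Complex.Gamma s) := by
    have := key.div_const (Complex.Gamma s)
    convert this using 2 with n
    · rfl
    field_simp
  have hco : ∀ n : ℕ, a n / (p n : ℂ) ^ s
      = Complex.exp ((n + 1 : ℕ) * x) / ((n + 1 : ℕ) : ℂ) ^ s := by
    intro n; simp only [a, p]; push_cast; ring_nf
  rw [← funext hco, key2.tsum_eq, mellin, one_div, div_eq_inv_mul]
  congr 1
  refine setIntegral_congr_fun measurableSet_Ioi (fun t ht ↦ ?_)
  simp [F, smul_eq_mul, mul_div_assoc]
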